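/- Let G be a finite simple graph containing no theta, pyramid, prism, or turtle as an induced subgraph, let H be a hole in G, and let u and v be two major vertices for H with uv ∈ E(G). Then either u and v cross with respect to H, or u and v have a common neighbor in H. -/

import Mathlib

namespace Paper

open SimpleGraph

variable {V : Type*}

/-- The set of neighbors of `v` inside the set `H`. -/
def nbrsIn (G : SimpleGraph V) (v : V) (H : Set V) : Set V :=
  {u | u ∈ H ∧ G.Adj v u}

/-- The vertex set of a walk. -/
def supp {G : SimpleGraph V} {a b : V} (P : G.Walk a b) : Set V :=
  {v | v ∈ P.support}

/-- `H` is a hole of `G`: an induced cycle of length at least 4.  (A finite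
graph is a cycle iff it is connected and `2`-regular.) -/
def IsHole (G : SimpleGraph V) (H : Set V) : Prop :=
  H.Finite ∧ 4 ≤ H.ncard ∧ (G.induce H).Connected ∧
    ∀ v ∈ H, (nbrsIn G v H).ncard = 2

/-- `G` contains a theta as an induced subgraph. -/
def HasTheta (G : SimpleGraph V) : Prop :=
  ∃ (a b : V) (P₁ P₂ P₃ : G.Walk a b),
    a ≠ b ∧ ¬ G.Adj a b ∧
    P₁.IsPath ∧ P₂.IsPath ∧ P₃.IsPath ∧
    2 ≤ P₁.length ∧ 2 ≤ P₂.length ∧ 2 ≤ P₃.length ∧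
    (∀ v, v ∈ P₁.support → v ∈ P₂.support → v = a ∨ v = b) ∧
    (∀ v, v ∈ P₁.support → v ∈ P₃.support → v = a ∨ v = b) ∧
    (∀ v, v ∈ P₂.support → v ∈ P₃.support → v = a ∨ v = b) ∧
    IsHole G (supp P₁ ∪ supp P₂) ∧
    IsHole G (supp P₁ ∪ supp P₃) ∧
    IsHole G (supp P₂ ∪ supp P₃)

/-- `G` contains a pyramid as an induced subgraph. -/
def HasPyramid (G : SimpleGraph V) : Prop :=
  ∃ (a b₁ b₂ b₃ : V) (P₁ : G.Walk a b₁) (P₂ : G.Walk a b₂) (P₃ : G.Walk a b₃),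
    G.Adj b₁ b₂ ∧ G.Adj b₂ b₃ ∧ G.Adj b₁ b₃ ∧
    P₁.IsPath ∧ P₂.IsPath ∧ P₃.IsPath ∧
    (∀ v, v ∈ P₁.support → v ∈ P₂.support → v = a) ∧
    (∀ v, v ∈ P₁.support → v ∈ P₃.support → v = a) ∧
    (∀ v, v ∈ P₂.support → v ∈ P₃.support → v = a) ∧
    ¬ (P₁.length = 1 ∧ P₂.length = 1) ∧
    ¬ (P₁.length = 1 ∧ P₃.length = 1) ∧
    ¬ (P₂.length = 1 ∧ P₃.length = 1) ∧
    IsHole G (supp P₁ ∪ supp P₂) ∧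
    IsHole G (supp P₁ ∪ supp P₃) ∧
    IsHole G (supp P₂ ∪ supp P₃)

/-- `G` contains a prism as an induced subgraph. -/
def HasPrism (G : SimpleGraph V) : Prop :=
  ∃ (a₁ a₂ a₃ b₁ b₂ b₃ : V) (P₁ : G.Walk a₁ b₁) (P₂ : G.Walk a₂ b₂)
      (P₃ : G.Walk a₃ b₃),
    G.Adj a₁ a₂ ∧ G.Adj a₂ a₃ ∧ G.Adj a₁ a₃ ∧
    G.Adj b₁ b₂ ∧ G.Adj b₂ b₃ ∧ G.Adj b₁ b₃ ∧
    P₁.IsPath ∧ P₂.IsPath ∧ P₃.IsPath ∧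
    (∀ v, v ∈ P₁.support → v ∉ P₂.support) ∧
    (∀ v, v ∈ P₁.support → v ∉ P₃.support) ∧
    (∀ v, v ∈ P₂.support → v ∉ P₃.support) ∧
    IsHole G (supp P₁ ∪ supp P₂) ∧
    IsHole G (supp P₁ ∪ supp P₃) ∧
    IsHole G (supp P₂ ∪ supp P₃)

/-- `G` contains a turtle as an induced subgraph. -/
def HasTurtle (G : SimpleGraph V) : Prop :=
  ∃ (a₁ b₁ a₂ b₂ x y : V) (P₁ : G.Walk a₁ b₁) (P₂ : G.Walk a₂ b₂),
    P₁.IsPath ∧ P₂.IsPath ∧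
    (∀ v, v ∈ P₁.support → v ∉ P₂.support) ∧
    G.Adj a₁ a₂ ∧ G.Adj b₁ b₂ ∧ G.Adj x y ∧
    x ∉ P₁.support ∧ x ∉ P₂.support ∧ y ∉ P₁.support ∧ y ∉ P₂.support ∧
    IsHole G (supp P₁ ∪ supp P₂) ∧
    3 ≤ (nbrsIn G x (supp P₁)).ncard ∧
    (∀ v ∈ P₂.support, ¬ G.Adj x v) ∧
    3 ≤ (nbrsIn G y (supp P₂)).ncard ∧
    (∀ v ∈ P₁.support, ¬ G.Adj y v)

/-- `G` contains no theta, pyramid, prism, or turtle as an induced subgraph. -/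
def TPPTFree (G : SimpleGraph V) : Prop :=
  ¬ HasTheta G ∧ ¬ HasPyramid G ∧ ¬ HasPrism G ∧ ¬ HasTurtle G

/-- The neighborhood of a set `X`: all vertices outside `X` with a neighbor in `X`. -/
def setNbrs (G : SimpleGraph V) (X : Set V) : Set V :=
  {v | v ∉ X ∧ ∃ x ∈ X, G.Adj x v}

/-- `A` is a connected component of `G ∖ C`. -/
def IsCompOf (G : SimpleGraph V) (C A : Set V) : Prop :=
  A.Nonempty ∧ Disjoint A C ∧ (G.induce A).Connected ∧
    ∀ a ∈ A, ∀ b : V, G.Adj a b → b ∉ C → b ∈ A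

/-- `C` is a minimal separator of `G`: there are two distinct components `L`, `R`
of `G ∖ C` with `N(L) = N(R) = C`. -/
def IsMinSep (G : SimpleGraph V) (C : Set V) : Prop :=
  ∃ L R : Set V, IsCompOf G C L ∧ IsCompOf G C R ∧ L ≠ R ∧
    setNbrs G L = C ∧ setNbrs G R = C

/-- A proper separator: a minimal separator that is not a clique. -/
def IsProperSep (G : SimpleGraph V) (C : Set V) : Prop :=
  IsMinSep G C ∧ ¬ (∀ a ∈ C, ∀ b ∈ C, a ≠ b → G.Adj a b)

/-- `u` is a minor vertex for the hole `H`: `u ∉ H`, `u` has a neighbor in `H` and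
all its neighbors in `H` lie in a path of `H` with at most three vertices. -/
def IsMinorFor (G : SimpleGraph V) (u : V) (H : Set V) : Prop :=
  u ∉ H ∧ (nbrsIn G u H).Nonempty ∧
    ∃ a b c : V, a ∈ H ∧ b ∈ H ∧ c ∈ H ∧ G.Adj a b ∧ G.Adj b c ∧ a ≠ c ∧
      nbrsIn G u H ⊆ {a, b, c}

/-- `u` is a major vertex for the hole `H`. -/
def IsMajorFor (G : SimpleGraph V) (u : V) (H : Set V) : Prop :=
  u ∉ H ∧ (nbrsIn G u H).Nonempty ∧ ¬ IsMinorFor G u H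

/-- `u` is a pendant of `H`: it has a unique neighbor in `H`. -/
def IsPendant (G : SimpleGraph V) (u : V) (H : Set V) : Prop :=
  u ∉ H ∧ ∃ a : V, nbrsIn G u H = {a}

/-- `u` is a cap of `H`: it has exactly two neighbors in `H` and they are adjacent. -/
def IsCap (G : SimpleGraph V) (u : V) (H : Set V) : Prop :=
  u ∉ H ∧ ∃ a b : V, a ≠ b ∧ G.Adj a b ∧ nbrsIn G u H = {a, b}

/-- `u` is a clone of `y` in `H`: its neighbors in `H` are exactly the three
vertices of a path `x-y-z` of `H`. -/
def IsCloneOf (G : SimpleGraph V) (u y : V) (H : Set V) : Prop :=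
  u ∉ H ∧ ∃ x z : V, x ∈ H ∧ y ∈ H ∧ z ∈ H ∧ G.Adj x y ∧ G.Adj y z ∧ x ≠ z ∧
    nbrsIn G u H = {x, y, z}

/-- `u` is a clone (of some vertex) in `H`. -/
def IsClone (G : SimpleGraph V) (u : V) (H : Set V) : Prop :=
  ∃ y, IsCloneOf G u y H

/-- `P` is a `u`-sector of the hole `H`: a path contained in `H` whose ends are
neighbors of `u` and whose interior is anticomplete to `u`. -/
def IsSector (G : SimpleGraph V) (u : V) (H : Set V) {a b : V} (P : G.Walk a b) : Prop :=
  P.IsPath ∧ (∀ v ∈ P.support, v ∈ H) ∧ G.Adj u a ∧ G.Adj u b ∧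
    ∀ v ∈ P.support, v ≠ a → v ≠ b → ¬ G.Adj u v

/-- `u` and `v` are nested with respect to the hole `H`: there are distinct
`a, b ∈ H` such that one `ab`-path of `H` contains all neighbors of `u` in `H`
and the other `ab`-path of `H` contains all neighbors of `v` in `H`. -/
def Nested (G : SimpleGraph V) (u v : V) (H : Set V) : Prop :=
  ∃ a b : V, a ∈ H ∧ b ∈ H ∧ a ≠ b ∧
    ∃ (P Q : G.Walk a b), P.IsPath ∧ Q.IsPath ∧
      supp P ∪ supp Q = H ∧
      (∀ x, x ∈ P.support → x ∈ Q.support → x = a ∨ x = b) ∧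
      (∀ x ∈ H, G.Adj u x → x ∈ P.support) ∧
      (∀ x ∈ H, G.Adj v x → x ∈ Q.support)

/-- `u` is a hub for the hole `H`: its neighbors in `H` are exactly four vertices
`p, q, r, s` appearing in that order along `H`, with `pq, rs ∈ E(G)` and
`ps, qr ∉ E(G)`. -/
def IsHub (G : SimpleGraph V) (u : V) (H : Set V) : Prop :=
  u ∉ H ∧ ∃ (p q r s : V) (A : G.Walk q r) (B : G.Walk s p),
    p ≠ q ∧ p ≠ r ∧ p ≠ s ∧ q ≠ r ∧ q ≠ s ∧ r ≠ s ∧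
    nbrsIn G u H = {p, q, r, s} ∧
    G.Adj p q ∧ G.Adj r s ∧ ¬ G.Adj p s ∧ ¬ G.Adj q r ∧
    A.IsPath ∧ B.IsPath ∧
    (∀ v, v ∈ A.support → v ∉ B.support) ∧
    supp A ∪ supp B = H

/-- `N` is an extended neighborhood of `w` in the hole `H`. -/
def IsExtNbhd (G : SimpleGraph V) (w : V) (H N : Set V) : Prop :=
  ∃ (x y x' y' : V) (Q : G.Walk x y),
    IsSector G w H Q ∧
    x' ∈ H ∧ x' ∉ Q.support ∧ G.Adj x' x ∧
    y' ∈ H ∧ y' ∉ Q.support ∧ G.Adj y' y ∧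
    N = supp Q ∪ ({x', y'} ∩ nbrsIn G w H)

/-- `a` and `b` are distant in `H` with respect to `w`: no extended neighborhood
of `w` in `H` contains both `a` and `b`. -/
def Distant (G : SimpleGraph V) (w : V) (H : Set V) (a b : V) : Prop :=
  a ∈ H ∧ b ∈ H ∧ ∀ N : Set V, IsExtNbhd G w H N → ¬ (a ∈ N ∧ b ∈ N)

/-- `P` is an `(H, w)`-significant path. -/
def IsSignificant (G : SimpleGraph V) (w : V) (H : Set V) {p q : V}
    (P : G.Walk p q) : Prop :=
  P.IsPath ∧ ∃ a b : V, a ∈ H ∧ G.Adj p a ∧ ¬ G.Adj w a ∧ b ∈ H ∧ G.Adj q b ∧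
    Distant G w H a b

/-- `v` is a gem-center for the hole `H`. -/
def IsGemCenter (G : SimpleGraph V) (v : V) (H : Set V) : Prop :=
  5 ≤ H.ncard ∧ ∃ h₁ h₂ h₃ h₄ : V, h₁ ∈ H ∧ h₂ ∈ H ∧ h₃ ∈ H ∧ h₄ ∈ H ∧
    G.Adj h₁ h₂ ∧ G.Adj h₂ h₃ ∧ G.Adj h₃ h₄ ∧ h₁ ≠ h₃ ∧ h₁ ≠ h₄ ∧ h₂ ≠ h₄ ∧
    nbrsIn G v H = {h₁, h₂, h₃, h₄}

/-- `x` is the center of a star cutset of `G`. -/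
def IsStarCutsetCenter (G : SimpleGraph V) (x : V) : Prop :=
  ∃ X : Set V, x ∈ X ∧ (∀ y ∈ X, y ≠ x → G.Adj x y) ∧
    ¬ (G.induce (Xᶜ)).Preconnected

/-- `v` is `(c₁, c₂)`-heavy with respect to the hole `H`. -/
def IsHeavy (G : SimpleGraph V) (c₁ c₂ : V) (H : Set V) (v : V) : Prop :=
  IsMajorFor G v H ∧ Distant G v H c₁ c₂

/-- The pair of paths `HL`, `HR` forms a `(C, c₁, c₂)`-hole with frame
`(c₁, c₂, ℓ₁', ℓ₁, r₁, r₁', ℓ₂', ℓ₂, r₂, r₂')`, where `L` and `R` are the two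
full components of the proper separator `C`. -/
def IsCHoleWithFrame (G : SimpleGraph V) (C L R : Set V)
    (c₁ c₂ ℓ₁ ℓ₁' ℓ₂ ℓ₂' r₁ r₁' r₂ r₂' : V) (HL HR : G.Walk c₁ c₂) : Prop :=
  HL.IsPath ∧ HR.IsPath ∧
  (∀ v, v ∈ HL.support → v ∈ HR.support → v = c₁ ∨ v = c₂) ∧
  IsHole G (supp HL ∪ supp HR) ∧
  c₁ ∈ C ∧ c₂ ∈ C ∧
  (∀ v, v ∈ HL.support → v ≠ c₁ → v ≠ c₂ → v ∈ L) ∧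
  (∀ v, v ∈ HR.support → v ≠ c₁ → v ≠ c₂ → v ∈ R) ∧
  (supp HL ∪ supp HR) ∩ C = {c₁, c₂} ∧
  ℓ₁ ∈ HL.support ∧ ℓ₁ ≠ c₂ ∧ G.Adj c₁ ℓ₁ ∧
  ℓ₂ ∈ HL.support ∧ ℓ₂ ≠ c₁ ∧ G.Adj c₂ ℓ₂ ∧
  r₁ ∈ HR.support ∧ r₁ ≠ c₂ ∧ G.Adj c₁ r₁ ∧
  r₂ ∈ HR.support ∧ r₂ ≠ c₁ ∧ G.Adj c₂ r₂ ∧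
  ((ℓ₁ = ℓ₂ ∧ ℓ₁' = ℓ₁) ∨
    (ℓ₁ ≠ ℓ₂ ∧ ℓ₁' ∈ HL.support ∧ ℓ₁' ≠ c₁ ∧ ℓ₁' ≠ c₂ ∧ G.Adj ℓ₁ ℓ₁')) ∧
  ((ℓ₁ = ℓ₂ ∧ ℓ₂' = ℓ₂) ∨
    (ℓ₁ ≠ ℓ₂ ∧ ℓ₂' ∈ HL.support ∧ ℓ₂' ≠ c₁ ∧ ℓ₂' ≠ c₂ ∧ G.Adj ℓ₂ ℓ₂')) ∧
  ((r₁ = r₂ ∧ r₁' = r₁) ∨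
    (r₁ ≠ r₂ ∧ r₁' ∈ HR.support ∧ r₁' ≠ c₁ ∧ r₁' ≠ c₂ ∧ G.Adj r₁ r₁')) ∧
  ((r₁ = r₂ ∧ r₂' = r₂) ∨
    (r₁ ≠ r₂ ∧ r₂' ∈ HR.support ∧ r₂' ≠ c₁ ∧ r₂' ≠ c₂ ∧ G.Adj r₂ r₂'))

/-- The 3-dimensional hypercube graph: vertices are elements of `{0,1}³`, two
vertices being adjacent exactly when they differ in one coordinate. -/
def cubeGraph : SimpleGraph (Fin 3 → Bool) where
  Adj x y := ∃! i, x i ≠ y i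
  symm := by
    constructor
    rintro x y ⟨i, hi, hj⟩
    exact ⟨i, Ne.symm hi, fun j h => hj j (Ne.symm h)⟩
  loopless := by
    constructor
    rintro x ⟨i, hi, -⟩
    exact hi rfl

section Aux

variable {V : Type*} {G : SimpleGraph V}

@[simp] lemma mem_supp {a b : V} {P : G.Walk a b} {x : V} :
    x ∈ supp P ↔ x ∈ P.support := Iff.rfl

@[simp] lemma mem_nbrsIn {w x : V} {S : Set V} :
    x ∈ nbrsIn G w S ↔ x ∈ S ∧ G.Adj w x := Iff.rfl

lemma supp_reverse {a b : V} (W : G.Walk a b) : supp W.reverse = supp W := by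
  ext z; simp [supp, Walk.support_reverse]

lemma getVert_mem_support {a b : V} (W : G.Walk a b) (i : ℕ) :
    W.getVert i ∈ W.support := by
  induction W generalizing i with
  | nil => simp [Walk.getVert]
  | cons h q ih =>
    cases i with
    | zero => simp
    | succ n =>
      rw [Walk.getVert_cons_succ, Walk.support_cons]
      exact List.mem_cons_of_mem _ (ih n)

lemma adj_of_length_one {a b : V} {W : G.Walk a b} (h : W.length = 1) : G.Adj a b := by
  have h1 := W.adj_getVert_succ (i := 0) (by omega)
  rw [Walk.getVert_zero] at h1
  rw [show 0 + 1 = W.length by omega, Walk.getVert_length] at h1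
  exact h1

lemma ends_eq_of_length_zero {a b : V} {W : G.Walk a b} (h : W.length = 0) : a = b := by
  have h1 := W.getVert_length
  rw [h, Walk.getVert_zero] at h1
  exact h1

lemma two_le_length {a b : V} {W : G.Walk a b} (hne : a ≠ b) (hadj : ¬ G.Adj a b) :
    2 ≤ W.length := by
  have h0 : W.length ≠ 0 := fun h => hne (ends_eq_of_length_zero h)
  have h1 : W.length ≠ 1 := fun h => hadj (adj_of_length_one h)
  omega

lemma support_sub_of_length_one {a b : V} {W : G.Walk a b} (h : W.length = 1) :
    ∀ z ∈ W.support, z = a ∨ z = b := by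
  cases W with
  | nil => simp at h
  | cons hadj q =>
    have hq0 : q.length = 0 := by simpa using h
    intro z hz
    rw [Walk.support_cons] at hz
    rcases List.mem_cons.mp hz with rfl | hzq
    · exact Or.inl rfl
    · right
      have hnil : q.Nil := Walk.nil_iff_length_eq.mpr hq0
      rw [Walk.nil_iff_support_eq.mp hnil] at hzq
      have := ends_eq_of_length_zero hq0
      simpa [← this] using hzq

lemma nbrs_eq_pair {S : Set V} (hfin : S.Finite) {w x y : V}
    (hcard : (nbrsIn G w S).ncard = 2) (hx : x ∈ nbrsIn G w S) (hy : y ∈ nbrsIn G w S)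
    (hxy : x ≠ y) : nbrsIn G w S = {x, y} := by
  have hfin' : (nbrsIn G w S).Finite := hfin.subset fun z hz => hz.1
  refine (Set.eq_of_subset_of_ncard_le ?_ ?_ hfin').symm
  · rintro z hz
    rcases hz with rfl | hz
    · exact hx
    · rw [Set.mem_singleton_iff] at hz; subst hz; exact hy
  · rw [hcard, Set.ncard_pair hxy]

lemma internal_two_nbrs {s t : V} {W : G.Walk s t} (hW : W.IsPath) {w : V}
    (hw : w ∈ W.support) (hws : w ≠ s) (hwt : w ≠ t) :
    ∃ n₁ n₂ : V, n₁ ≠ n₂ ∧ n₁ ∈ W.support ∧ n₂ ∈ W.support ∧ G.Adj w n₁ ∧ G.Adj w n₂ := by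
  induction W with
  | nil => simp only [Walk.support_nil, List.mem_singleton] at hw; exact absurd hw hws
  | @cons x c y h q ih =>
    rw [Walk.support_cons] at hw
    rcases List.mem_cons.mp hw with rfl | hwq
    · exact absurd rfl hws
    · have hq : q.IsPath := hW.of_cons
      have hxq : x ∉ q.support := ((Walk.cons_isPath_iff _ _).mp hW).2
      by_cases hwc : w = c
      · subst hwc
        have hnn : ¬ q.Nil := by
          rw [Walk.nil_iff_length_eq]
          intro h0
          exact hwt (ends_eq_of_length_zero h0)
        refine ⟨x, q.getVert 1, ?_, by simp, ?_, h.symm, Walk.adj_snd hnn⟩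
        · intro he; exact hxq (he ▸ getVert_mem_support q 1)
        · rw [Walk.support_cons]
          exact List.mem_cons_of_mem _ (getVert_mem_support q 1)
      · obtain ⟨n₁, n₂, hne, h1, h2, ha1, ha2⟩ := ih hq hwq hwc hwt
        exact ⟨n₁, n₂, hne, List.mem_cons_of_mem _ h1, List.mem_cons_of_mem _ h2, ha1, ha2⟩

lemma reachable_induce {S : Set V} : ∀ {x y : V} (W : G.Walk x y),
    (∀ v ∈ W.support, v ∈ S) →
    ∀ (hx : x ∈ S) (hy : y ∈ S), (G.induce S).Reachable ⟨x, hx⟩ ⟨y, hy⟩ := by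
  intro x y W
  induction W with
  | nil => intro _ hx hy; exact Reachable.refl _
  | @cons x c y h q ih =>
    intro hsup hx hy
    have hc : c ∈ S := hsup _ (by simp)
    have hadj : (G.induce S).Adj ⟨x, hx⟩ ⟨c, hc⟩ := h
    exact hadj.reachable.trans (ih (fun v hv => hsup v (by simp [hv])) hc hy)

lemma trimLeft {a b : V} (W : G.Walk a b) (hW : W.IsPath) (hnn : ¬ W.Nil) :
    ∃ (a' : V) (W' : G.Walk a' b), W'.IsPath ∧ G.Adj a a' ∧
      supp W' = supp W \ {a} ∧ W'.length + 1 = W.length := by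
  refine ⟨W.getVert 1, W.tail, hW.tail, Walk.adj_snd hnn, ?_,
    Walk.length_tail_add_one hnn⟩
  have hsupp := W.support_tail_of_not_nil hnn
  have hcons := W.support_eq_cons
  have hnd : a ∉ W.support.tail := by
    have h2 := hW.support_nodup
    rw [hcons] at h2
    exact (List.nodup_cons.mp h2).1
  ext z
  simp only [mem_supp, Set.mem_diff, Set.mem_singleton_iff, hsupp]
  constructor
  · intro hz
    refine ⟨by rw [hcons]; exact List.mem_cons_of_mem _ hz, ?_⟩
    rintro rfl; exact hnd hz
  · rintro ⟨hz, hza⟩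
    rw [hcons] at hz
    rcases List.mem_cons.mp hz with rfl | hz'
    · exact absurd rfl hza
    · exact hz'

lemma trimRight {a b : V} (W : G.Walk a b) (hW : W.IsPath) (hnn : ¬ W.Nil) :
    ∃ (b' : V) (W' : G.Walk a b'), W'.IsPath ∧ G.Adj b b' ∧
      supp W' = supp W \ {b} ∧ W'.length + 1 = W.length := by
  have hr : ¬ W.reverse.Nil := by
    rw [Walk.nil_iff_length_eq, Walk.length_reverse]
    rw [Walk.nil_iff_length_eq] at hnn
    exact hnn
  obtain ⟨b', W', hp, hadj, hsupp, hlen⟩ := trimLeft W.reverse hW.reverse hr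
  refine ⟨b', W'.reverse, hp.reverse, hadj, ?_, by simpa using hlen⟩
  rw [supp_reverse, hsupp, supp_reverse]

lemma split_cycle {a : V} (C : G.Walk a a) (hnodup : C.support.tail.Nodup)
    (htm : ∀ z, z ∈ C.support → z ∈ C.support.tail) {x₁ x₂ : V}
    (h₁ : x₁ ∈ C.support) (h₂ : x₂ ∈ C.support) (hne : x₁ ≠ x₂) :
    ∃ (R₁ : G.Walk x₁ x₂) (R₂ : G.Walk x₂ x₁), R₁.IsPath ∧ R₂.IsPath ∧
      (∀ z, (z ∈ R₁.support ∨ z ∈ R₂.support) ↔ z ∈ C.support) ∧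
      (∀ z, z ∈ R₁.support → z ∈ R₂.support → z = x₁ ∨ z = x₂) := by
  haveI : DecidableEq V := Classical.decEq V
  set C' := C.rotate x₁ h₁ with hC'
  have hrot : C'.support.tail ~r C.support.tail := C.support_rotate x₁ h₁
  have hnodup' : C'.support.tail.Nodup := hrot.nodup_iff.mpr hnodup
  have htailmem : ∀ z, z ∈ C'.support.tail ↔ z ∈ C.support.tail :=
    fun z => hrot.mem_iff
  have hmem : ∀ z, z ∈ C'.support ↔ z ∈ C.support := by
    intro z
    rw [C'.support_eq_cons, C.support_eq_cons]
    simp only [List.mem_cons]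
    constructor
    · intro hz0
      rcases hz0 with h0 | hz
      · have hx : x₁ ∈ a :: C.support.tail := C.support_eq_cons ▸ h₁
        rw [← h0] at hx
        exact List.mem_cons.mp hx
      · exact Or.inr ((htailmem z).mp hz)
    · intro hz
      have hz' : z ∈ C.support.tail := by
        rcases hz with rfl | hz
        · exact htm z C.start_mem_support
        · exact hz
      exact Or.inr ((htailmem z).mpr hz')
  have h₂' : x₂ ∈ C'.support := (hmem x₂).mpr h₂
  set R₁ := C'.takeUntil x₂ h₂' with hR₁
  set R₂ := C'.dropUntil x₂ h₂' with hR₂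
  have hspec : R₁.append R₂ = C' := C'.take_spec h₂'
  have hsupp2 : R₁.support ++ R₂.support.tail = C'.support := by
    rw [← Walk.support_append, hspec]
  have htail2 : R₁.support.tail ++ R₂.support.tail = C'.support.tail := by
    rw [← Walk.tail_support_append, hspec]
  have hnd : (R₁.support.tail ++ R₂.support.tail).Nodup := htail2 ▸ hnodup'
  obtain ⟨nd1, nd2, hdisj⟩ := List.nodup_append'.mp hnd
  have hx₂R₁ : x₂ ∈ R₁.support.tail := by
    have h := R₁.end_mem_support
    rw [R₁.support_eq_cons] at h
    rcases List.mem_cons.mp h with h | h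
    · exact absurd h.symm hne
    · exact h
  have hx₁R₂ : x₁ ∈ R₂.support.tail := by
    have h := R₂.end_mem_support
    rw [R₂.support_eq_cons] at h
    rcases List.mem_cons.mp h with h | h
    · exact absurd h hne
    · exact h
  have hp1 : R₁.IsPath := by
    apply Walk.IsPath.mk'
    rw [R₁.support_eq_cons]
    exact List.nodup_cons.mpr ⟨fun hx => hdisj hx hx₁R₂, nd1⟩
  have hp2 : R₂.IsPath := by
    apply Walk.IsPath.mk'
    rw [R₂.support_eq_cons]
    refine List.nodup_cons.mpr ⟨fun hx => hdisj hx₂R₁ hx, nd2⟩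
  refine ⟨R₁, R₂, hp1, hp2, ?_, ?_⟩
  · intro z
    rw [← hmem z, ← hsupp2, List.mem_append]
    constructor
    · rintro (hz | hz)
      · exact Or.inl hz
      · rw [R₂.support_eq_cons] at hz
        rcases List.mem_cons.mp hz with rfl | hz'
        · exact Or.inl R₁.end_mem_support
        · exact Or.inr hz'
    · rintro (hz | hz)
      · exact Or.inl hz
      · exact Or.inr (List.mem_of_mem_tail hz)
  · intro z hz1 hz2
    rw [R₁.support_eq_cons] at hz1
    rw [R₂.support_eq_cons] at hz2
    rcases List.mem_cons.mp hz1 with rfl | hz1'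
    · exact Or.inl rfl
    rcases List.mem_cons.mp hz2 with rfl | hz2'
    · exact Or.inr rfl
    · exact absurd hz2' (hdisj hz1')

lemma half_hole {H : Set V} (hH : IsHole G H) {u x₁ x₂ : V} (hne : x₁ ≠ x₂)
    (hnadj : ¬ G.Adj x₁ x₂) (hu : u ∉ H) (hnbrs : nbrsIn G u H = {x₁, x₂})
    {R R' : G.Walk x₁ x₂} (hR : R.IsPath) (hR' : R'.IsPath)
    (hcup : ∀ z, (z ∈ R.support ∨ z ∈ R'.support) ↔ z ∈ H)
    (hcap : ∀ z, z ∈ R.support → z ∈ R'.support → z = x₁ ∨ z = x₂) :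
    IsHole G (insert u (supp R)) := by
  haveI : DecidableEq V := Classical.decEq V
  obtain ⟨Hfin, Hcard, Hconn, hreg⟩ := hH
  have hRH : ∀ z ∈ R.support, z ∈ H := fun z hz => (hcup z).mp (Or.inl hz)
  have hR'H : ∀ z ∈ R'.support, z ∈ H := fun z hz => (hcup z).mp (Or.inr hz)
  have hx₁mem : x₁ ∈ nbrsIn G u H := by rw [hnbrs]; exact Set.mem_insert _ _
  have hx₂mem : x₂ ∈ nbrsIn G u H := by rw [hnbrs]; exact Set.mem_insert_of_mem _ rfl
  have hux₁ : G.Adj u x₁ := hx₁mem.2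
  have hux₂ : G.Adj u x₂ := hx₂mem.2
  have hx₁H : x₁ ∈ H := hx₁mem.1
  have hx₂H : x₂ ∈ H := hx₂mem.1
  have hnnR : ¬ R.Nil := by
    rw [Walk.nil_iff_length_eq]
    have := two_le_length (W := R) hne hnadj; omega
  have hnnR' : ¬ R'.Nil := by
    rw [Walk.nil_iff_length_eq]
    have := two_le_length (W := R') hne hnadj; omega
  have hnnRr : ¬ R.reverse.Nil := by
    rw [Walk.nil_iff_length_eq, Walk.length_reverse]
    rw [Walk.nil_iff_length_eq] at hnnR; exact hnnR
  have hnnR'r : ¬ R'.reverse.Nil := by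
    rw [Walk.nil_iff_length_eq, Walk.length_reverse]
    rw [Walk.nil_iff_length_eq] at hnnR'; exact hnnR'
  set K := insert u (supp R) with hK
  have hsubK : supp R ⊆ K := Set.subset_insert _ _
  have hKfin : K.Finite := (Hfin.subset fun z hz => hRH z hz).insert u
  have huK : u ∈ K := Set.mem_insert _ _
  have hx₁K : x₁ ∈ K := hsubK R.start_mem_support
  have hx₂K : x₂ ∈ K := hsubK R.end_mem_support
  -- neighbors of x₁
  set m := R.getVert 1 with hm
  set m' := R'.getVert 1 with hm'
  have ham : G.Adj x₁ m := Walk.adj_snd hnnR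
  have ham' : G.Adj x₁ m' := Walk.adj_snd hnnR'
  have hmR : m ∈ R.support := getVert_mem_support R 1
  have hm'R' : m' ∈ R'.support := getVert_mem_support R' 1
  have hmm' : m ≠ m' := by
    intro h
    rcases hcap m hmR (h ▸ hm'R') with h1 | h2
    · exact (G.ne_of_adj ham) h1.symm
    · exact hnadj (h2 ▸ ham)
  have hnx₁ : nbrsIn G x₁ H = {m, m'} :=
    nbrs_eq_pair Hfin (hreg x₁ hx₁H) ⟨hRH m hmR, ham⟩ ⟨hR'H m' hm'R', ham'⟩ hmm'
  -- neighbors of x₂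
  set mm := R.reverse.getVert 1 with hmmdef
  set mm' := R'.reverse.getVert 1 with hmm'def
  have hamm : G.Adj x₂ mm := Walk.adj_snd hnnRr
  have hamm' : G.Adj x₂ mm' := Walk.adj_snd hnnR'r
  have hmmR : mm ∈ R.support := by
    have h := getVert_mem_support R.reverse 1
    rw [Walk.support_reverse] at h
    exact List.mem_reverse.mp h
  have hmm'R' : mm' ∈ R'.support := by
    have h := getVert_mem_support R'.reverse 1
    rw [Walk.support_reverse] at h
    exact List.mem_reverse.mp h
  have hmmmm' : mm ≠ mm' := by
    intro h
    rcases hcap mm hmmR (h ▸ hmm'R') with h1 | h2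
    · exact hnadj (h1 ▸ hamm).symm
    · exact (G.ne_of_adj hamm) h2.symm
  have hnx₂ : nbrsIn G x₂ H = {mm, mm'} :=
    nbrs_eq_pair Hfin (hreg x₂ hx₂H) ⟨hRH mm hmmR, hamm⟩ ⟨hR'H mm' hmm'R', hamm'⟩ hmmmm'
  refine ⟨hKfin, ?_, ?_, ?_⟩
  · -- cardinality
    have hsub4 : ({u, x₁, m, x₂} : Set V) ⊆ K := by
      rintro z (rfl | rfl | rfl | rfl)
      · exact huK
      · exact hx₁K
      · exact hsubK hmR
      · exact hsubK R.end_mem_support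
    have hx₁m : x₁ ≠ m := G.ne_of_adj ham
    have hmx₂ : m ≠ x₂ := fun h => hnadj (h ▸ ham)
    have hcard4 : ({u, x₁, m, x₂} : Set V).ncard = 4 := by
      rw [Set.ncard_insert_of_notMem (by
        simp only [Set.mem_insert_iff, Set.mem_singleton_iff]
        push_neg
        exact ⟨fun h => hu (h ▸ hx₁H), fun h => hu (h ▸ hRH m hmR), fun h => hu (h ▸ hx₂H)⟩)
        (Set.toFinite _)]
      rw [Set.ncard_insert_of_notMem (by
        simp only [Set.mem_insert_iff, Set.mem_singleton_iff]
        push_neg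
        exact ⟨hx₁m, hne⟩) (Set.toFinite _)]
      rw [Set.ncard_insert_of_notMem (by simpa using hmx₂) (Set.toFinite _)]
      rw [Set.ncard_singleton]
    calc 4 = ({u, x₁, m, x₂} : Set V).ncard := hcard4.symm
    _ ≤ K.ncard := Set.ncard_le_ncard hsub4 hKfin
  · -- connectivity
    rw [connected_iff]
    constructor
    · have hre : ∀ (z : V) (hz : z ∈ K), (G.induce K).Reachable ⟨z, hz⟩ ⟨x₁, hx₁K⟩ := by
        intro z hz
        rcases Set.mem_insert_iff.mp hz with rfl | hzR
        · exact (SimpleGraph.Adj.reachable (by exact hux₁ : (G.induce K).Adj ⟨z, hz⟩ ⟨x₁, hx₁K⟩))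
        · have hzR' : z ∈ R.support := hzR
          have hWsub : ∀ v ∈ (R.takeUntil z hzR').support, v ∈ K :=
            fun v hv => hsubK (R.support_takeUntil_subset hzR' hv)
          exact (reachable_induce (R.takeUntil z hzR') hWsub hx₁K hz).symm
      intro p q
      exact (hre p.1 p.2).trans (hre q.1 q.2).symm
    · exact ⟨⟨u, huK⟩⟩
  · -- degree two
    intro w hw
    rcases Set.mem_insert_iff.mp hw with rfl | hwR
    · have hnu : nbrsIn G w K = {x₁, x₂} := by
        ext z
        simp only [mem_nbrsIn]
        constructor
        · rintro ⟨hzK, hadj⟩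
          rcases Set.mem_insert_iff.mp hzK with rfl | hzR
          · exact absurd rfl hadj.ne
          · have : z ∈ nbrsIn G w H := ⟨hRH z hzR, hadj⟩
            rw [hnbrs] at this
            exact this
        · rintro (rfl | rfl)
          · exact ⟨hx₁K, hux₁⟩
          · exact ⟨hx₂K, hux₂⟩
      rw [hnu, Set.ncard_pair hne]
    · by_cases hw1 : w = x₁
      · subst hw1
        have hnu : nbrsIn G w K = {u, m} := by
          ext z
          simp only [mem_nbrsIn]
          constructor
          · rintro ⟨hzK, hadj⟩
            rcases Set.mem_insert_iff.mp hzK with rfl | hzR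
            · exact Set.mem_insert _ _
            · have hz2 : z ∈ nbrsIn G w H := ⟨hRH z hzR, hadj⟩
              rw [hnx₁] at hz2
              rcases hz2 with rfl | hz2
              · exact Set.mem_insert_of_mem _ rfl
              · rw [Set.mem_singleton_iff] at hz2
                rcases hcap z hzR (by rw [hz2]; exact hm'R') with h1 | h2
                · exact absurd h1.symm (G.ne_of_adj hadj)
                · exact absurd (h2 ▸ hadj) hnadj
          · rintro (rfl | rfl)
            · exact ⟨huK, hux₁.symm⟩
            · exact ⟨hsubK hmR, ham⟩
        rw [hnu, Set.ncard_pair (fun h => hu (by rw [h]; exact hRH m hmR))]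
      · by_cases hw2 : w = x₂
        · subst hw2
          have hnu : nbrsIn G w K = {u, mm} := by
            ext z
            simp only [mem_nbrsIn]
            constructor
            · rintro ⟨hzK, hadj⟩
              rcases Set.mem_insert_iff.mp hzK with rfl | hzR
              · exact Set.mem_insert _ _
              · have hz2 : z ∈ nbrsIn G w H := ⟨hRH z hzR, hadj⟩
                rw [hnx₂] at hz2
                rcases hz2 with rfl | hz2
                · exact Set.mem_insert_of_mem _ rfl
                · rw [Set.mem_singleton_iff] at hz2
                  rcases hcap z hzR (by rw [hz2]; exact hmm'R') with h1 | h2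
                  · exact absurd (h1 ▸ hadj).symm hnadj
                  · exact absurd h2.symm (G.ne_of_adj hadj)
            · rintro (rfl | rfl)
              · exact ⟨huK, hux₂.symm⟩
              · exact ⟨hsubK hmmR, hamm⟩
          rw [hnu, Set.ncard_pair (fun h => hu (by rw [h]; exact hRH mm hmmR))]
        · obtain ⟨n₁, n₂, hn12, hn1R, hn2R, han1, han2⟩ :=
            internal_two_nbrs hR hwR hw1 hw2
          have hwH : w ∈ H := hRH w hwR
          have hNH : nbrsIn G w H = {n₁, n₂} :=
            nbrs_eq_pair Hfin (hreg w hwH) ⟨hRH n₁ hn1R, han1⟩ ⟨hRH n₂ hn2R, han2⟩ hn12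
          have hnu : nbrsIn G w K = {n₁, n₂} := by
            ext z
            simp only [mem_nbrsIn]
            constructor
            · rintro ⟨hzK, hadj⟩
              rcases Set.mem_insert_iff.mp hzK with rfl | hzR
              · exfalso
                have : w ∈ nbrsIn G z H := ⟨hwH, hadj.symm⟩
                rw [hnbrs] at this
                rcases this with h | h
                · exact hw1 h
                · exact hw2 h
              · have : z ∈ nbrsIn G w H := ⟨hRH z hzR, hadj⟩
                rw [hNH] at this
                exact this
            · rintro (rfl | rfl)
              · exact ⟨hsubK hn1R, han1⟩
              · exact ⟨hsubK hn2R, han2⟩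
          rw [hnu, Set.ncard_pair hn12]

lemma major_three_nbrs {H : Set V} (hH : IsHole G H) (hTheta : ¬ HasTheta G) {u : V}
    (hu : IsMajorFor G u H) {a : V} (C : G.Walk a a)
    (hCsupp : ∀ z, z ∈ C.support ↔ z ∈ H) (hCnodup : C.support.tail.Nodup)
    (hCtm : ∀ z, z ∈ C.support → z ∈ C.support.tail) :
    3 ≤ (nbrsIn G u H).ncard := by
  have Hfin := hH.1
  have hreg := hH.2.2.2
  obtain ⟨huH, hune, hnm⟩ := hu
  have hfinN : (nbrsIn G u H).Finite := Hfin.subset fun z hz => hz.1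
  by_contra hlt
  push_neg at hlt
  have hpos : 0 < (nbrsIn G u H).ncard := (Set.ncard_pos hfinN).mpr hune
  have h12 : (nbrsIn G u H).ncard = 1 ∨ (nbrsIn G u H).ncard = 2 := by omega
  rcases h12 with h1 | h2
  · obtain ⟨x, hx⟩ := Set.ncard_eq_one.mp h1
    have hxmem : x ∈ nbrsIn G u H := by rw [hx]; rfl
    obtain ⟨p, q, hpq, hpair⟩ := Set.ncard_eq_two.mp (hreg x hxmem.1)
    have hp : p ∈ nbrsIn G x H := by rw [hpair]; exact Set.mem_insert _ _
    have hq : q ∈ nbrsIn G x H := by rw [hpair]; exact Set.mem_insert_of_mem _ rfl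
    refine hnm ⟨huH, hune, p, x, q, hp.1, hxmem.1, hq.1, hp.2.symm, hq.2, hpq, ?_⟩
    rw [hx]
    rintro z rfl
    exact Or.inr (Or.inl rfl)
  · obtain ⟨x₁, x₂, hne, hpair⟩ := Set.ncard_eq_two.mp h2
    have h1m : x₁ ∈ nbrsIn G u H := by rw [hpair]; exact Set.mem_insert _ _
    have h2m : x₂ ∈ nbrsIn G u H := by rw [hpair]; exact Set.mem_insert_of_mem _ rfl
    have hx₁H : x₁ ∈ H := h1m.1
    have hx₂H : x₂ ∈ H := h2m.1
    have hux₁ : G.Adj u x₁ := h1m.2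
    have hux₂ : G.Adj u x₂ := h2m.2
    have hsubpair : nbrsIn G u H ⊆ {x₁, x₂} := by rw [hpair]
    by_cases hadj : G.Adj x₁ x₂
    · obtain ⟨p, q, hpqne, hp2⟩ := Set.ncard_eq_two.mp (hreg x₁ hx₁H)
      have hx₂n : x₂ ∈ nbrsIn G x₁ H := ⟨hx₂H, hadj⟩
      rw [hp2] at hx₂n
      have hget : ∃ r, r ∈ nbrsIn G x₁ H ∧ r ≠ x₂ := by
        rcases hx₂n with h | h
        · refine ⟨q, by rw [hp2]; exact Set.mem_insert_of_mem _ rfl, ?_⟩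
          rw [h]; exact hpqne.symm
        · rw [Set.mem_singleton_iff] at h
          refine ⟨p, by rw [hp2]; exact Set.mem_insert _ _, ?_⟩
          rw [h]; exact hpqne
      obtain ⟨r, hrmem, hrx₂⟩ := hget
      refine hnm ⟨huH, hune, r, x₁, x₂, hrmem.1, hx₁H, hx₂H, hrmem.2.symm, hadj, hrx₂, ?_⟩
      intro z hz
      rcases hsubpair hz with rfl | hz'
      · exact Or.inr (Or.inl rfl)
      · rw [Set.mem_singleton_iff] at hz'
        exact Or.inr (Or.inr hz')
    · by_cases hcmn : ∃ mc ∈ H, G.Adj x₁ mc ∧ G.Adj x₂ mc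
      · obtain ⟨mc, hmcH, hc1, hc2⟩ := hcmn
        refine hnm ⟨huH, hune, x₁, mc, x₂, hx₁H, hmcH, hx₂H, hc1, hc2.symm, hne, ?_⟩
        intro z hz
        rcases hsubpair hz with rfl | hz'
        · exact Or.inl rfl
        · rw [Set.mem_singleton_iff] at hz'
          exact Or.inr (Or.inr hz')
      · -- build a theta
        have hx₁C : x₁ ∈ C.support := (hCsupp x₁).mpr hx₁H
        have hx₂C : x₂ ∈ C.support := (hCsupp x₂).mpr hx₂H
        obtain ⟨R₁, R₂, hpa1, hpa2, hcup0, hcap0⟩ :=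
          split_cycle C hCnodup hCtm hx₁C hx₂C hne
        have hrev : ∀ z, z ∈ R₂.reverse.support ↔ z ∈ R₂.support := by
          intro z; rw [Walk.support_reverse]; exact List.mem_reverse
        have hcup : ∀ z, (z ∈ R₁.support ∨ z ∈ R₂.reverse.support) ↔ z ∈ H := by
          intro z
          rw [hrev z, hcup0 z, hCsupp z]
        have hcap : ∀ z, z ∈ R₁.support → z ∈ R₂.reverse.support → z = x₁ ∨ z = x₂ :=
          fun z h1 h2 => hcap0 z h1 ((hrev z).mp h2)
        set S : G.Walk x₁ x₂ := Walk.cons hux₁.symm (Walk.cons hux₂ Walk.nil) with hS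
        have hSsupp : S.support = [x₁, u, x₂] := by simp [hS]
        have hSmem : ∀ z, z ∈ S.support ↔ (z = x₁ ∨ z = u ∨ z = x₂) := by
          intro z; rw [hSsupp]; simp
        have hux₁' : u ≠ x₁ := fun h => huH (h ▸ hx₁H)
        have hux₂' : u ≠ x₂ := fun h => huH (h ▸ hx₂H)
        have hSpath : S.IsPath := by
          rw [Walk.isPath_def, hSsupp]
          simp [hne, hux₁', hux₂', Ne.symm hux₁', Ne.symm hux₂']
        have hlen1 : 2 ≤ R₁.length := two_le_length hne hadj
        have hlen2 : 2 ≤ R₂.reverse.length := two_le_length hne hadj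
        have hR₁H : ∀ z ∈ R₁.support, z ∈ H := fun z hz => (hcup z).mp (Or.inl hz)
        have hR₂H : ∀ z ∈ R₂.reverse.support, z ∈ H := fun z hz => (hcup z).mp (Or.inr hz)
        have hHole12 : supp R₁ ∪ supp R₂.reverse = H := by
          ext z
          simp only [Set.mem_union, mem_supp]
          exact hcup z
        have hU13 : supp R₁ ∪ supp S = insert u (supp R₁) := by
          ext z
          simp only [Set.mem_union, mem_supp, Set.mem_insert_iff, hSmem z]
          constructor
          · rintro (hz | rfl | rfl | rfl)
            · exact Or.inr hz
            · exact Or.inr R₁.start_mem_support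
            · exact Or.inl rfl
            · exact Or.inr R₁.end_mem_support
          · rintro (rfl | hz)
            · exact Or.inr (Or.inr (Or.inl rfl))
            · exact Or.inl hz
        have hU23 : supp R₂.reverse ∪ supp S = insert u (supp R₂.reverse) := by
          ext z
          simp only [Set.mem_union, mem_supp, Set.mem_insert_iff, hSmem z]
          constructor
          · rintro (hz | rfl | rfl | rfl)
            · exact Or.inr hz
            · exact Or.inr R₂.reverse.start_mem_support
            · exact Or.inl rfl
            · exact Or.inr R₂.reverse.end_mem_support
          · rintro (rfl | hz)
            · exact Or.inr (Or.inr (Or.inl rfl))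
            · exact Or.inl hz
        refine hTheta ⟨x₁, x₂, R₁, R₂.reverse, S, hne, hadj, hpa1, hpa2.reverse, hSpath,
          hlen1, hlen2, by simp [hS], hcap, ?_, ?_, ?_, ?_, ?_⟩
        · intro z hz1 hzS
          rcases (hSmem z).mp hzS with h | h | h
          · exact Or.inl h
          · exact absurd (hR₁H z hz1) (h ▸ huH)
          · exact Or.inr h
        · intro z hz2 hzS
          rcases (hSmem z).mp hzS with h | h | h
          · exact Or.inl h
          · exact absurd (hR₂H z hz2) (h ▸ huH)
          · exact Or.inr h
        · rw [hHole12]; exact hH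
        · rw [hU13]
          exact half_hole hH hne hadj huH hpair hpa1 hpa2.reverse hcup hcap
        · rw [hU23]
          refine half_hole hH hne hadj huH hpair hpa2.reverse hpa1 ?_
            (fun z h1 h2 => hcap z h2 h1)
          intro z
          rw [or_comm]
          exact hcup z

lemma turtle_of_partition {H : Set V} (hH : IsHole G H) {u v : V} (huv : G.Adj u v)
    (hu : u ∉ H) (hv : v ∉ H) {a₁ b₁ a₂ b₂ : V} (W₁ : G.Walk a₁ b₁) (W₂ : G.Walk a₂ b₂)
    (h₁ : W₁.IsPath) (h₂ : W₂.IsPath)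
    (hdisj : ∀ z, z ∈ W₁.support → z ∉ W₂.support)
    (ha : G.Adj a₁ a₂) (hb : G.Adj b₁ b₂)
    (hun : supp W₁ ∪ supp W₂ = H)
    (hu1 : ∀ x ∈ H, G.Adj u x → x ∈ W₁.support)
    (hv2 : ∀ x ∈ H, G.Adj v x → x ∈ W₂.support)
    (hu3 : 3 ≤ (nbrsIn G u H).ncard) (hv3 : 3 ≤ (nbrsIn G v H).ncard) :
    HasTurtle G := by
  have hW₁H : ∀ z ∈ W₁.support, z ∈ H := by
    intro z hz; rw [← hun]; exact Or.inl hz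
  have hW₂H : ∀ z ∈ W₂.support, z ∈ H := by
    intro z hz; rw [← hun]; exact Or.inr hz
  have hnb1 : nbrsIn G u (supp W₁) = nbrsIn G u H := by
    ext z
    simp only [mem_nbrsIn, mem_supp]
    exact ⟨fun ⟨hz, hadj⟩ => ⟨hW₁H z hz, hadj⟩, fun ⟨hz, hadj⟩ => ⟨hu1 z hz hadj, hadj⟩⟩
  have hnb2 : nbrsIn G v (supp W₂) = nbrsIn G v H := by
    ext z
    simp only [mem_nbrsIn, mem_supp]
    exact ⟨fun ⟨hz, hadj⟩ => ⟨hW₂H z hz, hadj⟩, fun ⟨hz, hadj⟩ => ⟨hv2 z hz hadj, hadj⟩⟩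
  refine ⟨a₁, b₁, a₂, b₂, u, v, W₁, W₂, h₁, h₂, hdisj, ha, hb, huv,
    fun h => hu (hW₁H u h), fun h => hu (hW₂H u h),
    fun h => hv (hW₁H v h), fun h => hv (hW₂H v h),
    by rw [hun]; exact hH, by rw [hnb1]; exact hu3, ?_, by rw [hnb2]; exact hv3, ?_⟩
  · intro z hz hadj
    exact hdisj z (hu1 z (hW₂H z hz) hadj) hz
  · intro z hz hadj
    exact hdisj z hz (hv2 z (hW₁H z hz) hadj)

end Aux

/-- In a (theta, pyramid, prism, turtle)-free graph, if `u` and `v` are two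
adjacent major vertices for a hole `H`, then either `u` and `v` cross with
respect to `H`, or they have a common neighbor in `H`. -/
theorem adjacent_majors_cross_or_common {V : Type*} (G : SimpleGraph V)
    (hG : TPPTFree G) (H : Set V) (hH : IsHole G H) (u v : V)
    (hu : IsMajorFor G u H) (hv : IsMajorFor G v H) (huv : G.Adj u v) :
    ¬ Nested G u v H ∨ ∃ w ∈ H, G.Adj u w ∧ G.Adj v w := by
  by_cases hcom : ∃ w ∈ H, G.Adj u w ∧ G.Adj v w
  · exact Or.inr hcom
  left
  intro hnest
  obtain ⟨a, b, haH, hbH, hab, P, Q, hP, hQ, hunion, hmeet, hup, hvq⟩ := hnest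
  have Hfin := hH.1
  have hreg := hH.2.2.2
  have huH := hu.1
  have hvH := hv.1
  have hnc : ∀ w ∈ H, ¬(G.Adj u w ∧ G.Adj v w) := fun w hw hc => hcom ⟨w, hw, hc⟩
  have hPH : ∀ z ∈ P.support, z ∈ H := by
    intro z hz; rw [← hunion]; exact Or.inl hz
  have hQH : ∀ z ∈ Q.support, z ∈ H := by
    intro z hz; rw [← hunion]; exact Or.inr hz
  have hHmem : ∀ z ∈ H, z ∈ P.support ∨ z ∈ Q.support := by
    intro z hz; rw [← hunion] at hz; exact hz
  -- both paths have length at least 2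
  have hlenP : 2 ≤ P.length := by
    by_contra hcon
    push_neg at hcon
    have h0 : P.length ≠ 0 := fun h0 => hab (ends_eq_of_length_zero h0)
    have h1 : P.length = 1 := by omega
    have hsub : ∀ z ∈ nbrsIn G u H, z = a ∨ z = b :=
      fun z hz => support_sub_of_length_one h1 z (hup z hz.1 hz.2)
    have hadjab : G.Adj a b := adj_of_length_one h1
    obtain ⟨p, q, hpq, hpair⟩ := Set.ncard_eq_two.mp (hreg b hbH)
    have hex : ∃ r, r ∈ nbrsIn G b H ∧ r ≠ a := by
      by_cases hpa : p = a
      · refine ⟨q, by rw [hpair]; exact Set.mem_insert_of_mem _ rfl, ?_⟩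
        intro h; exact hpq (hpa.trans h.symm)
      · exact ⟨p, by rw [hpair]; exact Set.mem_insert _ _, hpa⟩
    obtain ⟨r, hrm, hra⟩ := hex
    refine hu.2.2 ⟨huH, hu.2.1, a, b, r, haH, hbH, hrm.1, hadjab, hrm.2, hra.symm, ?_⟩
    intro z hz
    rcases hsub z hz with rfl | rfl
    · exact Or.inl rfl
    · exact Or.inr (Or.inl rfl)
  have hlenQ : 2 ≤ Q.length := by
    by_contra hcon
    push_neg at hcon
    have h0 : Q.length ≠ 0 := fun h0 => hab (ends_eq_of_length_zero h0)
    have h1 : Q.length = 1 := by omega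
    have hsub : ∀ z ∈ nbrsIn G v H, z = a ∨ z = b :=
      fun z hz => support_sub_of_length_one h1 z (hvq z hz.1 hz.2)
    have hadjab : G.Adj a b := adj_of_length_one h1
    obtain ⟨p, q, hpq, hpair⟩ := Set.ncard_eq_two.mp (hreg b hbH)
    have hex : ∃ r, r ∈ nbrsIn G b H ∧ r ≠ a := by
      by_cases hpa : p = a
      · refine ⟨q, by rw [hpair]; exact Set.mem_insert_of_mem _ rfl, ?_⟩
        intro h; exact hpq (hpa.trans h.symm)
      · exact ⟨p, by rw [hpair]; exact Set.mem_insert _ _, hpa⟩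
    obtain ⟨r, hrm, hra⟩ := hex
    refine hv.2.2 ⟨hvH, hv.2.1, a, b, r, haH, hbH, hrm.1, hadjab, hrm.2, hra.symm, ?_⟩
    intro z hz
    rcases hsub z hz with rfl | rfl
    · exact Or.inl rfl
    · exact Or.inr (Or.inl rfl)
  have hPnn : ¬ P.Nil := by rw [Walk.nil_iff_length_eq]; omega
  have hQnn : ¬ Q.Nil := by rw [Walk.nil_iff_length_eq]; omega
  -- the hole as a closed walk
  set C := P.append Q.reverse with hC
  have hQrevmem : ∀ z, z ∈ Q.reverse.support ↔ z ∈ Q.support := by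
    intro z; rw [Walk.support_reverse]; exact List.mem_reverse
  have hCmem : ∀ z, z ∈ C.support ↔ z ∈ H := by
    intro z
    rw [hC, Walk.mem_support_append_iff, hQrevmem z, ← hunion]
    rfl
  have hCtail : C.support.tail = P.support.tail ++ Q.reverse.support.tail :=
    Walk.tail_support_append P Q.reverse
  have hPa : a ∉ P.support.tail := by
    have h2 := hP.support_nodup
    rw [P.support_eq_cons] at h2
    exact (List.nodup_cons.mp h2).1
  have hQrb : b ∉ Q.reverse.support.tail := by
    have h2 := hQ.reverse.support_nodup
    rw [Q.reverse.support_eq_cons] at h2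
    exact (List.nodup_cons.mp h2).1
  have hdisjPQ : List.Disjoint P.support.tail Q.reverse.support.tail := by
    intro z hz1 hz2
    have hz1' : z ∈ P.support := List.mem_of_mem_tail hz1
    have hz2' : z ∈ Q.support := (hQrevmem z).mp (List.mem_of_mem_tail hz2)
    rcases hmeet z hz1' hz2' with rfl | rfl
    · exact hPa hz1
    · exact hQrb hz2
  have hCnodup : C.support.tail.Nodup := by
    rw [hCtail]
    exact List.nodup_append'.mpr ⟨hP.support_nodup.tail, hQ.reverse.support_nodup.tail, hdisjPQ⟩
  have haQrt : a ∈ Q.reverse.support.tail := by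
    have h := Q.reverse.end_mem_support
    rw [Q.reverse.support_eq_cons] at h
    rcases List.mem_cons.mp h with h | h
    · exact absurd h hab
    · exact h
  have hCtm : ∀ z, z ∈ C.support → z ∈ C.support.tail := by
    intro z hz
    rw [hCtail, List.mem_append]
    rw [hC, Walk.support_append, List.mem_append] at hz
    rcases hz with hz | hz
    · rw [P.support_eq_cons] at hz
      rcases List.mem_cons.mp hz with rfl | hz'
      · exact Or.inr haQrt
      · exact Or.inl hz'
    · exact Or.inr hz
  have hu3 := major_three_nbrs hH hG.1 hu C hCmem hCnodup hCtm
  have hv3 := major_three_nbrs hH hG.1 hv C hCmem hCnodup hCtm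
  -- build the turtle, case analysis on attachments at the junctions a and b
  apply hG.2.2.2
  by_cases hua : G.Adj u a
  · have hva : ¬ G.Adj v a := fun h => hnc a haH ⟨hua, h⟩
    by_cases hub : G.Adj u b
    · -- W₁ = P, W₂ = interior of Q
      have hvb : ¬ G.Adj v b := fun h => hnc b hbH ⟨hub, h⟩
      obtain ⟨a₂, Q₁, hQ₁p, hQa₂, hQ₁supp, hQ₁len⟩ := trimLeft Q hQ hQnn
      have hQ₁nn : ¬ Q₁.Nil := by rw [Walk.nil_iff_length_eq]; omega
      obtain ⟨b₂, W₂, hW₂p, hQb₂, hW₂supp, _⟩ := trimRight Q₁ hQ₁p hQ₁nn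
      have hsupp2 : supp W₂ = (supp Q \ {a}) \ {b} := by rw [hW₂supp, hQ₁supp]
      have hmem2 : ∀ z, z ∈ W₂.support ↔ (z ∈ Q.support ∧ z ≠ a ∧ z ≠ b) := by
        intro z
        constructor
        · intro hz
          have hz' : z ∈ (supp Q \ {a}) \ {b} := by rw [← hsupp2]; exact hz
          exact ⟨hz'.1.1, hz'.1.2, hz'.2⟩
        · intro ⟨h1, h2, h3⟩
          have : z ∈ (supp Q \ {a}) \ {b} := ⟨⟨h1, h2⟩, h3⟩
          rw [← hsupp2] at this; exact this
      apply turtle_of_partition hH huv huH hvH P W₂ hP hW₂p ?_ hQa₂ hQb₂ ?_ hup ?_ hu3 hv3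
      · intro z hz1 hz2
        rcases hmeet z hz1 ((hmem2 z).mp hz2).1 with rfl | rfl
        · exact ((hmem2 z).mp hz2).2.1 rfl
        · exact ((hmem2 z).mp hz2).2.2 rfl
      · ext z
        simp only [Set.mem_union, mem_supp]
        constructor
        · rintro (hz | hz)
          · exact hPH z hz
          · exact hQH z ((hmem2 z).mp hz).1
        · intro hz
          rcases hHmem z hz with hz' | hz'
          · exact Or.inl hz'
          · by_cases hza : z = a
            · exact Or.inl (hza ▸ P.start_mem_support)
            · by_cases hzb : z = b
              · exact Or.inl (hzb ▸ P.end_mem_support)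
              · exact Or.inr ((hmem2 z).mpr ⟨hz', hza, hzb⟩)
      · intro x hx hadj
        have hxa : x ≠ a := fun h => hva (h ▸ hadj)
        have hxb : x ≠ b := fun h => hvb (h ▸ hadj)
        exact (hmem2 x).mpr ⟨hvq x hx hadj, hxa, hxb⟩
    · -- W₁ = P minus b, W₂ = Q minus a
      obtain ⟨b₁, W₁, hW₁p, hPb₁, hW₁supp, _⟩ := trimRight P hP hPnn
      obtain ⟨a₂, W₂, hW₂p, hQa₂, hW₂supp, _⟩ := trimLeft Q hQ hQnn
      have hmem1 : ∀ z, z ∈ W₁.support ↔ (z ∈ P.support ∧ z ≠ b) := by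
        intro z
        constructor
        · intro hz
          have hz' : z ∈ supp P \ {b} := by rw [← hW₁supp]; exact hz
          exact ⟨hz'.1, hz'.2⟩
        · intro ⟨h1, h2⟩
          have : z ∈ supp P \ {b} := ⟨h1, h2⟩
          rw [← hW₁supp] at this; exact this
      have hmem2 : ∀ z, z ∈ W₂.support ↔ (z ∈ Q.support ∧ z ≠ a) := by
        intro z
        constructor
        · intro hz
          have hz' : z ∈ supp Q \ {a} := by rw [← hW₂supp]; exact hz
          exact ⟨hz'.1, hz'.2⟩
        · intro ⟨h1, h2⟩
          have : z ∈ supp Q \ {a} := ⟨h1, h2⟩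
          rw [← hW₂supp] at this; exact this
      apply turtle_of_partition hH huv huH hvH W₁ W₂ hW₁p hW₂p ?_ hQa₂ hPb₁.symm ?_ ?_ ?_ hu3 hv3
      · intro z hz1 hz2
        rcases hmeet z ((hmem1 z).mp hz1).1 ((hmem2 z).mp hz2).1 with rfl | rfl
        · exact ((hmem2 z).mp hz2).2 rfl
        · exact ((hmem1 z).mp hz1).2 rfl
      · ext z
        simp only [Set.mem_union, mem_supp]
        constructor
        · rintro (hz | hz)
          · exact hPH z ((hmem1 z).mp hz).1
          · exact hQH z ((hmem2 z).mp hz).1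
        · intro hz
          by_cases hza : z = a
          · exact Or.inl ((hmem1 z).mpr ⟨hza ▸ P.start_mem_support, hza ▸ hab⟩)
          · by_cases hzb : z = b
            · exact Or.inr ((hmem2 z).mpr ⟨hzb ▸ Q.end_mem_support, hzb ▸ (Ne.symm hab)⟩)
            · rcases hHmem z hz with hz' | hz'
              · exact Or.inl ((hmem1 z).mpr ⟨hz', hzb⟩)
              · exact Or.inr ((hmem2 z).mpr ⟨hz', hza⟩)
      · intro x hx hadj
        have hxb : x ≠ b := fun h => hub (h ▸ hadj)
        exact (hmem1 x).mpr ⟨hup x hx hadj, hxb⟩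
      · intro x hx hadj
        have hxa : x ≠ a := fun h => hva (h ▸ hadj)
        exact (hmem2 x).mpr ⟨hvq x hx hadj, hxa⟩
  · by_cases hub : G.Adj u b
    · -- W₁ = P minus a, W₂ = Q minus b
      have hvb : ¬ G.Adj v b := fun h => hnc b hbH ⟨hub, h⟩
      obtain ⟨a₁, W₁, hW₁p, hPa₁, hW₁supp, _⟩ := trimLeft P hP hPnn
      obtain ⟨b₂, W₂, hW₂p, hQb₂, hW₂supp, _⟩ := trimRight Q hQ hQnn
      have hmem1 : ∀ z, z ∈ W₁.support ↔ (z ∈ P.support ∧ z ≠ a) := by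
        intro z
        constructor
        · intro hz
          have hz' : z ∈ supp P \ {a} := by rw [← hW₁supp]; exact hz
          exact ⟨hz'.1, hz'.2⟩
        · intro ⟨h1, h2⟩
          have : z ∈ supp P \ {a} := ⟨h1, h2⟩
          rw [← hW₁supp] at this; exact this
      have hmem2 : ∀ z, z ∈ W₂.support ↔ (z ∈ Q.support ∧ z ≠ b) := by
        intro z
        constructor
        · intro hz
          have hz' : z ∈ supp Q \ {b} := by rw [← hW₂supp]; exact hz
          exact ⟨hz'.1, hz'.2⟩
        · intro ⟨h1, h2⟩
          have : z ∈ supp Q \ {b} := ⟨h1, h2⟩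
          rw [← hW₂supp] at this; exact this
      apply turtle_of_partition hH huv huH hvH W₁ W₂ hW₁p hW₂p ?_ hPa₁.symm hQb₂ ?_ ?_ ?_ hu3 hv3
      · intro z hz1 hz2
        rcases hmeet z ((hmem1 z).mp hz1).1 ((hmem2 z).mp hz2).1 with rfl | rfl
        · exact ((hmem1 z).mp hz1).2 rfl
        · exact ((hmem2 z).mp hz2).2 rfl
      · ext z
        simp only [Set.mem_union, mem_supp]
        constructor
        · rintro (hz | hz)
          · exact hPH z ((hmem1 z).mp hz).1
          · exact hQH z ((hmem2 z).mp hz).1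
        · intro hz
          by_cases hza : z = a
          · exact Or.inr ((hmem2 z).mpr ⟨hza ▸ Q.start_mem_support, hza ▸ hab⟩)
          · by_cases hzb : z = b
            · exact Or.inl ((hmem1 z).mpr ⟨hzb ▸ P.end_mem_support, hzb ▸ (Ne.symm hab)⟩)
            · rcases hHmem z hz with hz' | hz'
              · exact Or.inl ((hmem1 z).mpr ⟨hz', hza⟩)
              · exact Or.inr ((hmem2 z).mpr ⟨hz', hzb⟩)
      · intro x hx hadj
        have hxa : x ≠ a := fun h => hua (h ▸ hadj)
        exact (hmem1 x).mpr ⟨hup x hx hadj, hxa⟩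
      · intro x hx hadj
        have hxb : x ≠ b := fun h => hvb (h ▸ hadj)
        exact (hmem2 x).mpr ⟨hvq x hx hadj, hxb⟩
    · -- W₁ = interior of P, W₂ = Q
      obtain ⟨a₁, P₁, hP₁p, hPa₁, hP₁supp, hP₁len⟩ := trimLeft P hP hPnn
      have hP₁nn : ¬ P₁.Nil := by rw [Walk.nil_iff_length_eq]; omega
      obtain ⟨b₁, W₁, hW₁p, hPb₁, hW₁supp, _⟩ := trimRight P₁ hP₁p hP₁nn
      have hsupp1 : supp W₁ = (supp P \ {a}) \ {b} := by rw [hW₁supp, hP₁supp]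
      have hmem1 : ∀ z, z ∈ W₁.support ↔ (z ∈ P.support ∧ z ≠ a ∧ z ≠ b) := by
        intro z
        constructor
        · intro hz
          have hz' : z ∈ (supp P \ {a}) \ {b} := by rw [← hsupp1]; exact hz
          exact ⟨hz'.1.1, hz'.1.2, hz'.2⟩
        · intro ⟨h1, h2, h3⟩
          have : z ∈ (supp P \ {a}) \ {b} := ⟨⟨h1, h2⟩, h3⟩
          rw [← hsupp1] at this; exact this
      apply turtle_of_partition hH huv huH hvH W₁ Q hW₁p hQ ?_ hPa₁.symm hPb₁.symm ?_ ?_ hvq hu3 hv3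
      · intro z hz1 hz2
        rcases hmeet z ((hmem1 z).mp hz1).1 hz2 with rfl | rfl
        · exact ((hmem1 z).mp hz1).2.1 rfl
        · exact ((hmem1 z).mp hz1).2.2 rfl
      · ext z
        simp only [Set.mem_union, mem_supp]
        constructor
        · rintro (hz | hz)
          · exact hPH z ((hmem1 z).mp hz).1
          · exact hQH z hz
        · intro hz
          by_cases hza : z = a
          · exact Or.inr (hza ▸ Q.start_mem_support)
          · by_cases hzb : z = b
            · exact Or.inr (hzb ▸ Q.end_mem_support)
            · rcases hHmem z hz with hz' | hz'
              · exact Or.inl ((hmem1 z).mpr ⟨hz', hza, hzb⟩)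
              · exact Or.inr hz'
      · intro x hx hadj
        have hxa : x ≠ a := fun h => hua (h ▸ hadj)
        have hxb : x ≠ b := fun h => hub (h ▸ hadj)
        exact (hmem1 x).mpr ⟨hup x hx hadj, hxa, hxb⟩

end Paper
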